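/- Let M be a real symmetric m×m matrix with all entries strictly positive, and suppose the positive eigenspace of M (the span of eigenvectors with positive eigenvalues) is one-dimensional. Then for all vectors x, y ∈ ℝ^m with x ≥ 0 and y ≥ 0 (entrywise), one has ⟨x, My⟩² ≥ ⟨x, Mx⟩·⟨y, My⟩. -/

import Mathlib

open Matrix

lemma spec_formula (m : ℕ) (M : Matrix (Fin m) (Fin m) ℝ) (hM : M.IsHermitian)
    (v w : Fin m → ℝ) :
    v ⬝ᵥ M.mulVec w = ∑ i, hM.eigenvalues i *
      (inner ℝ (hM.eigenvectorBasis i) ((WithLp.equiv 2 (Fin m → ℝ)).symm v) : ℝ) *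
      (inner ℝ (hM.eigenvectorBasis i) ((WithLp.equiv 2 (Fin m → ℝ)).symm w) : ℝ) := by
  set b := hM.eigenvectorBasis
  have h1 : v ⬝ᵥ M.mulVec w =
      (inner ℝ ((WithLp.equiv 2 (Fin m → ℝ)).symm v) ((WithLp.equiv 2 (Fin m → ℝ)).symm (M.mulVec w)) : ℝ) := by
    simp [PiLp.inner_apply, dotProduct, mulVec, RCLike.inner_apply, Finset.mul_sum]
    exact Finset.sum_congr rfl fun i _ => by rw [Finset.sum_mul]; exact Finset.sum_congr rfl fun j _ => by ring
  rw [h1, ← OrthonormalBasis.sum_inner_mul_inner b]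
  congr 1
  ext i
  have h2 : (inner ℝ (b i) ((WithLp.equiv 2 (Fin m → ℝ)).symm (M.mulVec w)) : ℝ)
      = hM.eigenvalues i * inner ℝ (b i) ((WithLp.equiv 2 (Fin m → ℝ)).symm w) := by
    have hs : M.mulVec (⇑(b i)) = hM.eigenvalues i • ⇑(b i) := hM.mulVec_eigenvectorBasis i
    have hsym : ∀ (u z : Fin m → ℝ),
        (inner ℝ ((WithLp.equiv 2 (Fin m → ℝ)).symm (M.mulVec u)) ((WithLp.equiv 2 (Fin m → ℝ)).symm z) : ℝ)
        = inner ℝ ((WithLp.equiv 2 (Fin m → ℝ)).symm u) ((WithLp.equiv 2 (Fin m → ℝ)).symm (M.mulVec z)) := by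
      intro u z
      simp only [PiLp.inner_apply, RCLike.inner_apply, starRingEnd_apply, star_trivial,
        WithLp.equiv_symm_apply, PiLp.toLp_apply, mulVec, dotProduct, Finset.sum_mul, Finset.mul_sum]
      rw [Finset.sum_comm]
      apply Finset.sum_congr rfl; intro i _; apply Finset.sum_congr rfl; intro j _
      have : M j i = M i j := by
        have := hM; rw [Matrix.IsHermitian] at this
        calc M j i = Mᴴ i j := by simp [conjTranspose_apply]
        _ = M i j := by rw [this]
      rw [this]; ring
    have : ((WithLp.equiv 2 (Fin m → ℝ)).symm (M.mulVec (⇑(b i)))) = ((hM.eigenvalues i : ℝ) • (b i)) := by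
      rw [hs]; rfl
    calc (inner ℝ (b i) ((WithLp.equiv 2 (Fin m → ℝ)).symm (M.mulVec w)) : ℝ)
        = inner ℝ ((WithLp.equiv 2 (Fin m → ℝ)).symm (M.mulVec ⇑(b i))) ((WithLp.equiv 2 (Fin m → ℝ)).symm w) := by
          rw [hsym]; rfl
      _ = hM.eigenvalues i * inner ℝ (b i) ((WithLp.equiv 2 (Fin m → ℝ)).symm w) := by
          rw [this, inner_smul_left]; simp
  rw [h2]
  have : (inner ℝ ((WithLp.equiv 2 (Fin m → ℝ)).symm v) (b i) : ℝ) = inner ℝ (b i) ((WithLp.equiv 2 (Fin m → ℝ)).symm v) := real_inner_comm _ _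
  rw [this]; ring

/-- If a symmetric positive matrix has one-dimensional positive eigenspace,
then the Alexandrov-Fenchel-type inequality holds for nonnegative vectors. -/
theorem stmt_0 (m : ℕ) (M : Matrix (Fin m) (Fin m) ℝ) (hM : M.IsHermitian)
    (hpos : ∀ i j, 0 < M i j)
    (hdim : (Finset.univ.filter (fun i => 0 < hM.eigenvalues i)).card = 1)
    (x y : Fin m → ℝ) (hx : ∀ i, 0 ≤ x i) (hy : ∀ i, 0 ≤ y i) :
    (x ⬝ᵥ M.mulVec x) * (y ⬝ᵥ M.mulVec y) ≤ (x ⬝ᵥ M.mulVec y) ^ 2 := by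
  classical
  by_contra h
  push_neg at h
  set Qx := x ⬝ᵥ M.mulVec x with hQx
  set Qy := y ⬝ᵥ M.mulVec y with hQy
  set B := x ⬝ᵥ M.mulVec y with hB
  -- nonnegativity of quadratic forms
  have hQnn : ∀ (u v : Fin m → ℝ), (∀ i, 0 ≤ u i) → (∀ i, 0 ≤ v i) → 0 ≤ u ⬝ᵥ M.mulVec v := by
    intro u v hu hv
    rw [dotProduct]
    apply Finset.sum_nonneg
    intro i _
    apply mul_nonneg (hu i)
    rw [mulVec, dotProduct]
    apply Finset.sum_nonneg
    intro j _
    exact mul_nonneg (hpos i j).le (hv j)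
  have hQx0 : 0 ≤ Qx := hQnn x x hx hx
  have hQy0 : 0 ≤ Qy := hQnn y y hy hy
  have hprod : B ^ 2 < Qx * Qy := h
  have hQxpos : 0 < Qx := by
    rcases hQx0.lt_or_eq with h' | h'
    · exact h'
    · exfalso; nlinarith [sq_nonneg B]
  have hQypos : 0 < Qy := by
    rcases hQy0.lt_or_eq with h' | h'
    · exact h'
    · exfalso; nlinarith [sq_nonneg B]
  -- symmetry
  have hBsym : y ⬝ᵥ M.mulVec x = B := by
    rw [hB, spec_formula _ _ hM y x, spec_formula _ _ hM x y]
    exact Finset.sum_congr rfl fun i _ => by ring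
  -- expansion of the quadratic form
  have hexp : ∀ s t : ℝ, (s • x + t • y) ⬝ᵥ M.mulVec (s • x + t • y)
      = s^2 * Qx + 2 * s * t * B + t^2 * Qy := by
    intro s t
    simp only [Matrix.mulVec_add, Matrix.mulVec_smul, add_dotProduct, smul_dotProduct,
      dotProduct_add, dotProduct_smul, smul_eq_mul, ← hQx, ← hQy, ← hB, hBsym]
    ring
  -- positivity on the span
  have hposform : ∀ s t : ℝ, (s ≠ 0 ∨ t ≠ 0) →
      0 < (s • x + t • y) ⬝ᵥ M.mulVec (s • x + t • y) := by
    intro s t hst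
    rw [hexp]
    rcases eq_or_ne t 0 with ht | ht
    · subst ht
      have hs : s ≠ 0 := by tauto
      have : 0 < s^2 := by positivity
      nlinarith
    · have : 0 < t^2 := by positivity
      nlinarith [sq_nonneg (s * Qx + t * B)]
  -- the unique positive eigenvalue
  obtain ⟨k, hk⟩ := Finset.card_eq_one.mp hdim
  have hkpos : 0 < hM.eigenvalues k := by
    have : k ∈ Finset.univ.filter (fun i => 0 < hM.eigenvalues i) := by rw [hk]; exact Finset.mem_singleton_self k
    simpa using this
  have hneg : ∀ i, i ≠ k → hM.eigenvalues i ≤ 0 := by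
    intro i hi
    by_contra hc
    push_neg at hc
    have : i ∈ Finset.univ.filter (fun i => 0 < hM.eigenvalues i) := by simp [hc]
    rw [hk, Finset.mem_singleton] at this
    exact hi this
  set b := hM.eigenvectorBasis
  set c : Fin m → (Fin m → ℝ) → ℝ :=
    fun i v => (inner ℝ (b i) ((WithLp.equiv 2 (Fin m → ℝ)).symm v) : ℝ) with hc
  have hclin : ∀ (i : Fin m) (s t : ℝ), c i (s • x + t • y) = s * c i x + t * c i y := by
    intro i s t
    simp only [hc, PiLp.inner_apply, RCLike.inner_apply, starRingEnd_apply, star_trivial,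
      WithLp.equiv_symm_apply, PiLp.toLp_apply, Pi.add_apply, Pi.smul_apply, smul_eq_mul, mul_add,
      Finset.sum_add_distrib, Finset.mul_sum]
    rw [← Finset.sum_add_distrib]; exact Finset.sum_congr rfl fun j _ => by ring
  set A := c k x with hA
  set Bk := c k y with hBk
  set w : Fin m → ℝ := Bk • x + (-A) • y with hw
  have hQw : w ⬝ᵥ M.mulVec w ≤ 0 := by
    rw [spec_formula _ _ hM w w]
    apply Finset.sum_nonpos
    intro i _
    rcases eq_or_ne i k with rfl | hi
    · have : c i w = 0 := by rw [hw, hclin]; ring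
      have h2 : (inner ℝ (b i) ((WithLp.equiv 2 (Fin m → ℝ)).symm w) : ℝ) = c i w := rfl
      rw [h2, this]; simp
    · have h1 : hM.eigenvalues i ≤ 0 := hneg i hi
      have : (inner ℝ (b i) ((WithLp.equiv 2 (Fin m → ℝ)).symm w) : ℝ) = c i w := rfl
      rw [this]
      nlinarith [sq_nonneg (c i w)]
  rcases eq_or_ne Bk 0 with hb0 | hb0
  · rcases eq_or_ne A 0 with ha0 | ha0
    · -- both zero: Qx ≤ 0, contradiction
      have : Qx ≤ 0 := by
        rw [hQx, spec_formula _ _ hM x x]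
        apply Finset.sum_nonpos
        intro i _
        rcases eq_or_ne i k with rfl | hi
        · have : (inner ℝ (b i) ((WithLp.equiv 2 (Fin m → ℝ)).symm x) : ℝ) = A := rfl
          rw [this, ha0]; simp
        · have h1 : hM.eigenvalues i ≤ 0 := hneg i hi
          nlinarith [sq_nonneg (inner ℝ (b i) ((WithLp.equiv 2 (Fin m → ℝ)).symm x) : ℝ)]
      linarith
    · have := hposform Bk (-A) (Or.inr (neg_ne_zero.mpr ha0))
      rw [← hw] at this
      linarith
  · have := hposform Bk (-A) (Or.inl hb0)
    rw [← hw] at this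
    linarith
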